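/- arXiv:1907.02301 — 6 statements merged into one kernel-verified Lean document; each statement's English description precedes it below -/
import Mathlib

section
/- Let K be a category with finite limits and coequalizers of kernel pairs. The following are equivalent: (1) K has a small strong generator consisting of regular projective objects; (2) there exists a small set P of regular projective objects of K such that a morphism f of K is a regular epimorphism if and only if Hom(P, f) is a surjection for every P ∈ P. Furthermore, if these conditions hold, K is a regular category. -/
open CategoryTheory CategoryTheory.Limits Opposite

universe w v u

namespace Paper

variable {C : Type u} [Category.{v} C]

/-- An object is finitely presentable if its covariant hom-functor preserves
small filtered colimits. -/
def FinPres (A : C) : Prop :=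
  ∀ (J : Type v) (_ : SmallCategory J), IsFiltered J →
    PreservesColimitsOfShape J (coyoneda.obj (op A))

/-- `f` is a regular epimorphism (a coequalizer of some pair). -/
def IsRegEpi {X Y : C} (f : X ⟶ Y) : Prop := Nonempty (RegularEpi f)

/-- `P` is regular projective: `Hom(P,-)` sends regular epimorphisms to surjections. -/
def RegProjective (P : C) : Prop :=
  ∀ ⦃X Y : C⦄ (f : X ⟶ Y), IsRegEpi f → Function.Surjective (fun g : P ⟶ X => g ≫ f)

/-- A regular category: finite limits, coequalizers of kernel pairs, and regular
epimorphisms stable under pullback. -/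
structure IsRegularCategory (C : Type u) [Category.{v} C] : Prop where
  hasFiniteLimits : HasFiniteLimits C
  hasCoequalizersOfKernelPairs :
    ∀ {X Y R : C} (f : X ⟶ Y) (p q : R ⟶ X), IsKernelPair f p q → HasCoequalizer p q
  regEpiPullbackStable :
    ∀ {P X Y Z : C} (fst : P ⟶ X) (snd : P ⟶ Y) (f : X ⟶ Z) (g : Y ⟶ Z),
      IsPullback fst snd f g → IsRegEpi f → IsRegEpi snd

/-- `(p, q)` is an internal equivalence relation on `X` (via generalized elements). -/
structure IsEquivalenceRelationPair {R X : C} (p q : R ⟶ X) : Prop where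
  jointly_mono : ∀ {Z : C} (a b : Z ⟶ R), a ≫ p = b ≫ p → a ≫ q = b ≫ q → a = b
  refl : ∀ {Z : C} (x : Z ⟶ X), ∃ r : Z ⟶ R, r ≫ p = x ∧ r ≫ q = x
  symm : ∀ {Z : C} (r : Z ⟶ R), ∃ s : Z ⟶ R, s ≫ p = r ≫ q ∧ s ≫ q = r ≫ p
  trans : ∀ {Z : C} (r s : Z ⟶ R), r ≫ q = s ≫ p →
    ∃ t : Z ⟶ R, t ≫ p = r ≫ p ∧ t ≫ q = s ≫ q

/-- An exact category: regular and every equivalence relation is effective. -/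
structure IsExactCategory (C : Type u) [Category.{v} C] extends IsRegularCategory C : Prop where
  effectiveEquivalenceRelations :
    ∀ {R X : C} (p q : R ⟶ X), IsEquivalenceRelationPair p q →
      ∃ (Y : C) (f : X ⟶ Y), IsKernelPair f p q

/-- Locally finitely presentable category. -/
structure IsLFP (C : Type u) [Category.{v} C] : Prop where
  hasColimits : HasColimitsOfSize.{v, v} C
  exists_generator : ∃ (ι : Type v) (G : ι → C),
    ObjectProperty.IsDetecting (Set.range G) ∧ ∀ i, FinPres (G i)

/-- A finitary quasivariety: cocomplete with a small strong generator of finitely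
presentable regular projective objects. -/
structure IsFinitaryQuasivariety (C : Type u) [Category.{v} C] : Prop where
  hasColimits : HasColimitsOfSize.{v, v} C
  exists_generator : ∃ (ι : Type v) (G : ι → C),
    ObjectProperty.IsDetecting (Set.range G) ∧ ∀ i, FinPres (G i) ∧ RegProjective (G i)

/-- The injectivity class determined by a family of morphisms. -/
def Inj {L : Type u} [Category.{v} L] {ι : Type w} (A B : ι → L) (h : ∀ i, A i ⟶ B i) :
    Set L :=
  {X | ∀ (i : ι) (g : A i ⟶ X), ∃ g' : B i ⟶ X, h i ≫ g' = g}

/-- `p : X ⟶ S` is a weak reflection of `X` into `D`. -/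
def WeakReflection {L : Type u} [Category.{v} L] (D : Set L) {X S : L} (p : X ⟶ S) : Prop :=
  S ∈ D ∧ ∀ T ∈ D, ∀ g : X ⟶ T, ∃ k : S ⟶ T, p ≫ k = g



section Aux

variable {K : Type u} [Category.{v} K] [HasFiniteLimits K]

lemma surj_to_regepi
    (hcoeq : ∀ {X Y R : K} (f : X ⟶ Y) (p q : R ⟶ X), IsKernelPair f p q → HasCoequalizer p q)
    {ι : Type v} (G : ι → K) (hdet : ObjectProperty.IsDetecting (Set.range G))
    (hproj : ∀ i, RegProjective (G i))
    {X Y : K} (f : X ⟶ Y)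
    (hsurj : ∀ i, Function.Surjective (fun g : G i ⟶ X => g ≫ f)) :
    IsRegEpi f := by
  have kp : IsKernelPair f (pullback.fst f f) (pullback.snd f f) := IsPullback.of_hasPullback f f
  haveI := hcoeq f _ _ kp
  set p := pullback.fst f f with hp
  set q := pullback.snd f f with hq
  have hpq : p ≫ f = q ≫ f := pullback.condition
  set c := coequalizer.π p q with hc
  set t : coequalizer p q ⟶ Y := coequalizer.desc f hpq with ht
  have hct : c ≫ t = f := coequalizer.π_desc _ _
  have hcre : IsRegEpi c := ⟨coequalizerRegular p q⟩
  have : IsIso t := by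
    apply hdet
    rintro _ ⟨i, rfl⟩ h
    obtain ⟨h', hh'⟩ := hsurj i h
    have hh2 : h' ≫ f = h := hh'
    refine ⟨h' ≫ c, ?_, ?_⟩
    · show (h' ≫ c) ≫ t = h
      rw [Category.assoc, hct]; exact hh2
    intro u hu
    have hu2 : u ≫ t = h := hu
    obtain ⟨u', hu'⟩ := hproj i c hcre u
    have hu3 : u' ≫ c = u := hu'
    have huf : u' ≫ f = h' ≫ f := by
      calc u' ≫ f = u' ≫ c ≫ t := by rw [hct]
      _ = (u' ≫ c) ≫ t := (Category.assoc _ _ _).symm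
      _ = u ≫ t := by rw [hu3]
      _ = h := hu2
      _ = h' ≫ f := hh2.symm
    have h1 : pullback.lift u' h' huf ≫ p = u' := pullback.lift_fst _ _ _
    have h2 : pullback.lift u' h' huf ≫ q = h' := pullback.lift_snd _ _ _
    calc u = u' ≫ c := hu3.symm
    _ = pullback.lift u' h' huf ≫ p ≫ c := by rw [← Category.assoc, h1]
    _ = pullback.lift u' h' huf ≫ q ≫ c := by rw [coequalizer.condition]
    _ = h' ≫ c := by rw [← Category.assoc, h2]
  refine ⟨⟨pullback f f, p, q, hpq, ?_⟩⟩
  refine Cofork.IsColimit.mk _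
    (fun s => inv t ≫ coequalizer.desc s.π s.condition) (fun s => ?_) (fun s m hm => ?_)
  · show f ≫ inv t ≫ coequalizer.desc s.π s.condition = s.π
    have hfi : f ≫ inv t = c := by rw [IsIso.comp_inv_eq]; exact hct.symm
    rw [← Category.assoc, hfi, coequalizer.π_desc]
  · show m = inv t ≫ coequalizer.desc s.π s.condition
    have hm' : f ≫ m = s.π := hm
    have htm : t ≫ m = coequalizer.desc s.π s.condition := by
      apply coequalizer.hom_ext
      rw [← Category.assoc, hct, hm', coequalizer.π_desc]
    rw [← htm, IsIso.inv_hom_id_assoc]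

lemma crit_to_detecting {ι : Type v} (G : ι → K) (_hproj : ∀ i, RegProjective (G i))
    (hcrit : ∀ {X Y : K} (f : X ⟶ Y),
      IsRegEpi f ↔ ∀ i, Function.Surjective (fun g : G i ⟶ X => g ≫ f)) :
    ObjectProperty.IsDetecting (Set.range G) := by
  intro X Y f hf
  have hre : IsRegEpi f := by
    rw [hcrit]
    intro i h
    obtain ⟨h', hh', -⟩ := hf (G i) ⟨i, rfl⟩ h
    exact ⟨h', hh'⟩
  set p := pullback.fst f f with hp
  set q := pullback.snd f f with hq
  have hpq : p ≫ f = q ≫ f := pullback.condition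
  have key : ∀ (i : ι) (g : G i ⟶ pullback f f), g ≫ p = g ≫ q := by
    intro i g
    obtain ⟨h', -, huniq⟩ := hf (G i) ⟨i, rfl⟩ (g ≫ p ≫ f)
    have e1 := huniq (g ≫ p) (by show (g ≫ p) ≫ f = g ≫ p ≫ f; rw [Category.assoc])
    have e2 := huniq (g ≫ q)
      (by show (g ≫ q) ≫ f = g ≫ p ≫ f; rw [Category.assoc, ← hpq])
    rw [e1, e2]
  set d : X ⟶ pullback f f := pullback.lift (𝟙 X) (𝟙 X) rfl with hd
  have hdp : d ≫ p = 𝟙 X := pullback.lift_fst _ _ _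
  have hdq : d ≫ q = 𝟙 X := pullback.lift_snd _ _ _
  have hdre : IsRegEpi d := by
    rw [hcrit]
    intro i g
    refine ⟨g ≫ p, ?_⟩
    show (g ≫ p) ≫ d = g
    apply pullback.hom_ext
    · rw [Category.assoc, hdp, Category.comp_id]
    · rw [Category.assoc, hdq, Category.comp_id, key]
  haveI : IsRegularEpi d := ⟨hdre⟩
  haveI : IsSplitMono d := ⟨⟨⟨p, hdp⟩⟩⟩
  haveI : IsIso d := isIso_of_mono_of_strongEpi d
  have hpq' : p = q := by rw [← cancel_epi d, hdp, hdq]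
  haveI : Mono f := by
    constructor
    intro Z a b hab
    have h3 : pullback.lift a b hab ≫ p = pullback.lift a b hab ≫ q := by rw [hpq']
    rwa [hp, hq, pullback.lift_fst, pullback.lift_snd] at h3
  haveI : IsRegularEpi f := ⟨hre⟩
  exact isIso_of_mono_of_strongEpi f

end Aux

/-- For a category `K` with finite limits and coequalizers of kernel
pairs, having a small strong generator of regular projectives is equivalent to the
existence of a small family of regular projectives jointly detecting regular
epimorphisms; moreover either condition implies that `K` is regular. -/
theorem statement2 (K : Type u) [Category.{v} K] [HasFiniteLimits K]
    (hcoeq : ∀ {X Y R : K} (f : X ⟶ Y) (p q : R ⟶ X), IsKernelPair f p q → HasCoequalizer p q) :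
    ((∃ (ι : Type v) (G : ι → K), ObjectProperty.IsDetecting (Set.range G) ∧ ∀ i, RegProjective (G i)) ↔
      (∃ (ι : Type v) (G : ι → K), (∀ i, RegProjective (G i)) ∧
        ∀ {X Y : K} (f : X ⟶ Y),
          IsRegEpi f ↔ ∀ i, Function.Surjective (fun g : G i ⟶ X => g ≫ f))) ∧
    ((∃ (ι : Type v) (G : ι → K), ObjectProperty.IsDetecting (Set.range G) ∧ ∀ i, RegProjective (G i)) →
      IsRegularCategory K) := by
  have crit : ∀ (_ : ∃ (ι : Type v) (G : ι → K),
        ObjectProperty.IsDetecting (Set.range G) ∧ ∀ i, RegProjective (G i)),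
      ∃ (ι : Type v) (G : ι → K), (∀ i, RegProjective (G i)) ∧
        ∀ {X Y : K} (f : X ⟶ Y),
          IsRegEpi f ↔ ∀ i, Function.Surjective (fun g : G i ⟶ X => g ≫ f) := by
    rintro ⟨ι, G, hdet, hproj⟩
    refine ⟨ι, G, hproj, fun {X Y} f => ⟨fun hre i => hproj i f hre, fun hsurj => ?_⟩⟩
    exact surj_to_regepi hcoeq G hdet hproj f hsurj
  constructor
  · constructor
    · exact crit
    · rintro ⟨ι, G, hproj, hcrit⟩
      exact ⟨ι, G, crit_to_detecting G hproj @hcrit, hproj⟩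
  · intro h
    obtain ⟨ι, G, hproj, hcrit⟩ := crit h
    refine ⟨inferInstance, hcoeq, ?_⟩
    intro P X Y Z fst snd f g hpb hf
    rw [hcrit]
    intro i gi
    obtain ⟨h', hh'⟩ := hproj i f hf (gi ≫ g)
    have hh2 : h' ≫ f = gi ≫ g := hh'
    exact ⟨hpb.lift h' gi hh2, hpb.lift_snd _ _ _⟩

end Paper
end

section
/- Let K be a finitary quasivariety. Then regular epimorphisms in K are closed under small products: for any set-indexed family (e_i : A_i → B_i) of regular epimorphisms, the induced morphism ∏_i A_i → ∏_i B_i is a regular epimorphism. -/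
open CategoryTheory CategoryTheory.Limits Opposite

universe w v u

namespace Paper

variable {C : Type u} [Category.{v} C]

/-- In a finitary quasivariety, regular epimorphisms are closed under
small products: given a family of regular epimorphisms `e i : A i ⟶ B i`, products
`PA` of the `A i` and `PB` of the `B i`, the induced morphism `PA ⟶ PB` is a
regular epimorphism. -/
theorem statement3 (K : Type u) [Category.{v} K] (hK : IsFinitaryQuasivariety K)
    (ι : Type v) (A B : ι → K) (e : ∀ i, A i ⟶ B i) (he : ∀ i, IsRegEpi (e i))
    (PA PB : K) (pA : ∀ i, PA ⟶ A i) (pB : ∀ i, PB ⟶ B i)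
    (hPA : Nonempty (IsLimit (Fan.mk PA pA))) (hPB : Nonempty (IsLimit (Fan.mk PB pB)))
    (m : PA ⟶ PB) (hm : ∀ i, m ≫ pB i = pA i ≫ e i) :
    IsRegEpi m := by
  obtain ⟨ι', G, hdet, hG⟩ := hK.exists_generator
  haveI : HasColimitsOfSize.{v, v} K := hK.hasColimits
  obtain ⟨LA⟩ := hPA
  obtain ⟨LB⟩ := hPB
  -- Step 1: every map from a generator into PB lifts along m.
  have hsurj : ∀ (j : ι') (g : G j ⟶ PB), ∃ u : G j ⟶ PA, u ≫ m = g := by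
    intro j g
    choose u hu using fun i => (hG j).2 (e i) (he i) (g ≫ pB i)
    refine ⟨LA.lift (Fan.mk (G j) u), ?_⟩
    apply LB.hom_ext
    rintro ⟨i⟩
    have hA := LA.fac (Fan.mk (G j) u) ⟨i⟩
    simp only [Fan.mk_pt, Fan.mk_π_app] at hA ⊢
    rw [Category.assoc, hm i, ← Category.assoc, hA]
    exact hu i
  -- The pseudo-kernel-pair of m on generators.
  let Idx := Σ j : ι', {p : (G j ⟶ PA) × (G j ⟶ PA) // p.1 ≫ m = p.2 ≫ m}
  let F : Idx → K := fun x => G x.1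
  let a : ∐ F ⟶ PA := Sigma.desc fun x => x.2.1.1
  let b : ∐ F ⟶ PA := Sigma.desc fun x => x.2.1.2
  have hw : a ≫ m = b ≫ m := by
    apply colimit.hom_ext
    rintro ⟨x⟩
    simpa [a, b, F] using x.2.2
  let t : coequalizer a b ⟶ PB := coequalizer.desc m hw
  have hqt : coequalizer.π a b ≫ t = m := coequalizer.π_desc m hw
  have hpair : ∀ (j : ι') (u v : G j ⟶ PA), u ≫ m = v ≫ m →
      u ≫ coequalizer.π a b = v ≫ coequalizer.π a b := by
    intro j u v huv
    have h1 : Sigma.ι F ⟨j, ⟨(u, v), huv⟩⟩ ≫ a = u := by simp [a, F]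
    have h2 : Sigma.ι F ⟨j, ⟨(u, v), huv⟩⟩ ≫ b = v := by simp [b, F]
    have hcond := coequalizer.condition a b
    calc u ≫ coequalizer.π a b
        = Sigma.ι F ⟨j, ⟨(u, v), huv⟩⟩ ≫ a ≫ coequalizer.π a b := by
          rw [← Category.assoc, h1]
      _ = Sigma.ι F ⟨j, ⟨(u, v), huv⟩⟩ ≫ b ≫ coequalizer.π a b := by rw [hcond]
      _ = v ≫ coequalizer.π a b := by rw [← Category.assoc, h2]
  haveI : IsIso t := by
    apply hdet
    rintro _ ⟨j, rfl⟩ g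
    obtain ⟨u, hu⟩ := hsurj j g
    refine ⟨u ≫ coequalizer.π a b, ?_, ?_⟩
    · show (u ≫ coequalizer.π a b) ≫ t = g
      rw [Category.assoc, hqt, hu]
    · intro w hwt
      have hwt' : w ≫ t = g := hwt
      obtain ⟨v, hv⟩ := (hG j).2 (coequalizer.π a b) ⟨coequalizerRegular a b⟩ w
      have hv' : v ≫ coequalizer.π a b = w := hv
      have hvm : v ≫ m = u ≫ m := by
        rw [hu, ← hwt', ← hv', ← hqt, Category.assoc]
      rw [← hv', hpair j v u hvm]
  -- m is a coequalizer of (a, b).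
  refine ⟨⟨∐ F, a, b, hw, ?_⟩⟩
  have hminv : m ≫ inv t = coequalizer.π a b := by
    rw [← hqt, Category.assoc, IsIso.hom_inv_id, Category.comp_id]
  refine Cofork.IsColimit.mk _
    (fun s => inv t ≫ coequalizer.desc s.π s.condition) (fun s => ?_) (fun s k hk => ?_)
  · show m ≫ inv t ≫ coequalizer.desc s.π s.condition = s.π
    rw [← Category.assoc, hminv, coequalizer.π_desc]
  · have hk' : m ≫ k = s.π := hk
    have heq : coequalizer.π a b ≫ t ≫ k
        = coequalizer.π a b ≫ coequalizer.desc s.π s.condition := by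
      rw [coequalizer.π_desc, ← Category.assoc, hqt, hk']
    have htk : t ≫ k = coequalizer.desc s.π s.condition :=
      (cancel_epi (coequalizer.π a b)).mp heq
    show k = inv t ≫ coequalizer.desc s.π s.condition
    rw [← htk, IsIso.inv_hom_id_assoc]

end Paper
end

section
/- Let K be a finitary quasivariety with small strong generator P consisting of finitely presentable regular projective objects. Then K has enough regular projectives: every object of K admits a regular epimorphism from a regular projective object. Moreover, an object Q of K is regular projective if and only if Q is a retract of a small coproduct of objects of P. -/
open CategoryTheory CategoryTheory.Limits Opposite

universe w v u

namespace Paper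

variable {C : Type u} [Category.{v} C]

section Aux

variable {K : Type u} [Category.{v} K]

/-- A coequalizer composed with an isomorphism is a regular epi. -/
lemma regEpi_comp_iso {X Y Z : K} (f g : X ⟶ Y) [HasCoequalizer f g]
    (m : coequalizer f g ⟶ Z) [IsIso m] : IsRegEpi (coequalizer.π f g ≫ m) := by
  refine ⟨⟨X, f, g, by rw [← Category.assoc, ← Category.assoc, coequalizer.condition], ?_⟩⟩
  refine Cofork.IsColimit.mk _ (fun s => inv m ≫ coequalizer.desc s.π s.condition) ?_ ?_
  · intro s
    simp
  · intro s k hk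
    rw [eq_comm, IsIso.inv_comp_eq]
    apply coequalizer.hom_ext
    rw [coequalizer.π_desc]
    simpa using hk.symm

/-- A retract of a regular projective object is regular projective. -/
lemma regProjective_of_retract {Q S : K} (hS : RegProjective S) (s : Q ⟶ S) (r : S ⟶ Q)
    (hsr : s ≫ r = 𝟙 Q) : RegProjective Q := by
  intro X Y f hf g
  obtain ⟨h, hh⟩ := hS f hf (r ≫ g)
  exact ⟨s ≫ h, by simp only at hh ⊢; rw [Category.assoc, hh, ← Category.assoc, hsr,
    Category.id_comp]⟩

/-- A coproduct of regular projective objects is regular projective. -/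
lemma regProjective_coproduct {κ : Type w} {F : κ → K} (hF : ∀ k, RegProjective (F k))
    {S : K} (c : ∀ k, F k ⟶ S) (hc : IsColimit (Cofan.mk S c)) : RegProjective S := by
  intro X Y f hf g
  choose h hh using fun k => hF k f hf (c k ≫ g)
  refine ⟨hc.desc (Cofan.mk X h), ?_⟩
  refine hc.hom_ext fun ⟨k⟩ => ?_
  have := hc.fac (Cofan.mk X h) ⟨k⟩
  simp only at this hh ⊢
  rw [← Category.assoc, this]
  exact hh k

end Aux


section Main

variable {K : Type u} [Category.{v} K] [HasColimitsOfSize.{v, v} K]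
variable {ι : Type v} {G : ι → K}

/-- The canonical morphism from the coproduct of all generators over all maps into `X`
is a regular epimorphism. -/
lemma canonical_regEpi (hdet : ObjectProperty.IsDetecting (Set.range G)) (hproj : ∀ i, RegProjective (G i))
    (X : K) :
    IsRegEpi (Sigma.desc (fun p : Σ i, (G i ⟶ X) => p.2) :
      (∐ fun p : (Σ i, (G i ⟶ X)) => G p.1) ⟶ X) := by
  set P : K := ∐ fun p : (Σ i, (G i ⟶ X)) => G p.1 with hP
  set e : P ⟶ X := Sigma.desc (fun p : Σ i, (G i ⟶ X) => p.2) with he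
  let R : Type v := Σ j : ι, {pq : (G j ⟶ P) × (G j ⟶ P) // pq.1 ≫ e = pq.2 ≫ e}
  let u : (∐ fun r : R => G r.1) ⟶ P := Sigma.desc fun r => r.2.1.1
  let v : (∐ fun r : R => G r.1) ⟶ P := Sigma.desc fun r => r.2.1.2
  have hu : ∀ r : R, Sigma.ι (fun r : R => G r.1) r ≫ u = r.2.1.1 := fun r => Sigma.ι_desc _ _
  have hv : ∀ r : R, Sigma.ι (fun r : R => G r.1) r ≫ v = r.2.1.2 := fun r => Sigma.ι_desc _ _
  have hw : u ≫ e = v ≫ e := by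
    apply Limits.Sigma.hom_ext
    intro r
    rw [← Category.assoc, ← Category.assoc, hu r, hv r]
    exact r.2.2
  let m : coequalizer u v ⟶ X := coequalizer.desc e hw
  have hπm : coequalizer.π u v ≫ m = e := coequalizer.π_desc e hw
  have hiso : IsIso m := by
    apply hdet
    rintro A ⟨i, rfl⟩ h
    refine ⟨Sigma.ι (fun p : (Σ i, (G i ⟶ X)) => G p.1) ⟨i, h⟩ ≫ coequalizer.π u v, ?_, ?_⟩
    · show (Sigma.ι (fun p : (Σ i, (G i ⟶ X)) => G p.1) ⟨i, h⟩ ≫ coequalizer.π u v) ≫ m = h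
      rw [Category.assoc, hπm]
      exact Sigma.ι_desc _ _
    · intro a ha
      obtain ⟨a', ha'⟩ := hproj i (coequalizer.π u v) ⟨coequalizerRegular u v⟩ a
      simp only at ha'
      set b' : G i ⟶ P := Sigma.ι (fun p : (Σ i, (G i ⟶ X)) => G p.1) ⟨i, h⟩ with hb'
      have heq : a' ≫ e = b' ≫ e := by
        have e1 : a' ≫ e = h := by rw [← hπm, ← Category.assoc, ha']; exact ha
        have e2 : b' ≫ e = h := Sigma.ι_desc _ _
        rw [e1, e2]
      let r : R := ⟨i, ⟨(a', b'), heq⟩⟩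
      have h1 : Sigma.ι (fun r : R => G r.1) r ≫ u = a' := Sigma.ι_desc _ _
      have h2 : Sigma.ι (fun r : R => G r.1) r ≫ v = b' := Sigma.ι_desc _ _
      have h3 : u ≫ coequalizer.π u v = v ≫ coequalizer.π u v := coequalizer.condition u v
      calc a = a' ≫ coequalizer.π u v := ha'.symm
        _ = Sigma.ι (fun r : R => G r.1) r ≫ u ≫ coequalizer.π u v := by
              rw [← Category.assoc, h1]
        _ = Sigma.ι (fun r : R => G r.1) r ≫ v ≫ coequalizer.π u v := by rw [h3]
        _ = b' ≫ coequalizer.π u v := by rw [← Category.assoc, h2]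
  rw [← hπm]
  exact regEpi_comp_iso u v m

end Main

/-- A finitary quasivariety `K`, with small strong generator `G`
consisting of finitely presentable regular projectives, has enough regular
projectives, and an object is regular projective iff it is a retract of a small
coproduct of objects of the generator. -/
theorem statement5 (K : Type u) [Category.{v} K] [HasColimitsOfSize.{v, v} K]
    (ι : Type v) (G : ι → K) (hdet : ObjectProperty.IsDetecting (Set.range G))
    (hfp : ∀ i, FinPres (G i)) (hproj : ∀ i, RegProjective (G i)) :
    (∀ X : K, ∃ (P : K) (f : P ⟶ X), RegProjective P ∧ IsRegEpi f) ∧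
    (∀ Q : K, RegProjective Q ↔
      ∃ (κ : Type v) (g : κ → ι) (S : K) (c : ∀ k, G (g k) ⟶ S),
        Nonempty (IsColimit (Cofan.mk S c)) ∧
        ∃ (s : Q ⟶ S) (r : S ⟶ Q), s ≫ r = 𝟙 Q) := by
  have hPproj : ∀ X : K, RegProjective (∐ fun p : (Σ i, (G i ⟶ X)) => G p.1) := fun X =>
    regProjective_coproduct (fun p : (Σ i, (G i ⟶ X)) => hproj p.1) _
      (coproductIsCoproduct (fun p : (Σ i, (G i ⟶ X)) => G p.1))
  constructor
  · intro X
    exact ⟨_, Sigma.desc (fun p : Σ i, (G i ⟶ X) => p.2), hPproj X,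
      canonical_regEpi hdet hproj X⟩
  · intro Q
    constructor
    · intro hQ
      obtain ⟨s, hs⟩ := hQ _ (canonical_regEpi hdet hproj Q) (𝟙 Q)
      exact ⟨Σ i, (G i ⟶ Q), fun p : (Σ i, (G i ⟶ Q)) => p.1, _,
        Sigma.ι (fun p : (Σ i, (G i ⟶ Q)) => G p.1),
        ⟨coproductIsCoproduct _⟩, s, Sigma.desc (fun p : Σ i, (G i ⟶ Q) => p.2),
        by simpa using hs⟩
    · rintro ⟨κ, g, S, c, ⟨hc⟩, s, r, hsr⟩
      exact regProjective_of_retract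
        (regProjective_coproduct (fun k => hproj (g k)) c hc) s r hsr


end Paper
end

section
/- Let K be a cocomplete category which is a finitary quasivariety, with small strong generator P of finitely presentable regular projective objects, and let A be a small category. Then the functor category [A, K] is a finitary quasivariety: a small strong generator consisting of finitely presentable regular projective objects is given by the functors A(a,−) · P (the copower of P by the hom-functor A(a,−)) for a ∈ A and P ∈ P. If K is moreover a finitary variety (i.e. exact), then so is [A, K]. -/
open CategoryTheory CategoryTheory.Limits Opposite

universe w v u

namespace Paper

variable {C : Type u} [Category.{v} C]

/-- The copower `A(a,-) · P`: the functor `A ⥤ K` sending `b` to the coproduct of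
copies of `P` indexed by `a ⟶ b`. -/
noncomputable def homCopower {K : Type u} [Category.{v} K] [HasColimitsOfSize.{v, v} K]
    {A : Type v} [SmallCategory A] (a : A) (P : K) : A ⥤ K where
  obj b := ∐ (fun (_ : a ⟶ b) => P)
  map {b c} f := Sigma.desc (fun g => Sigma.ι (fun (_ : a ⟶ c) => P) (g ≫ f))
  map_id b := by
    ext g
    simp
  map_comp {b c d} f g := by
    ext h
    simp


section Aux

variable {K : Type u} [Category.{v} K] [HasColimitsOfSize.{v, v} K]
variable {A : Type v} [SmallCategory A]

/-- The adjunction-style bijection `(A(a,-) · P ⟶ F) ≃ (P ⟶ F a)`. -/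
noncomputable def copowerEquiv (a : A) (P : K) (F : A ⥤ K) :
    (homCopower a P ⟶ F) ≃ (P ⟶ F.obj a) where
  toFun η := Sigma.ι (fun (_ : a ⟶ a) => P) (𝟙 a) ≫ η.app a
  invFun g :=
    { app := fun b => Sigma.desc fun h : a ⟶ b => g ≫ F.map h
      naturality := by
        intro b c f
        dsimp [homCopower]
        ext h
        simp }
  left_inv := by
    intro η
    ext b : 2
    refine Sigma.hom_ext _ _ fun h => ?_
    rw [Sigma.ι_desc]
    dsimp only
    erw [Category.assoc, ← η.naturality h]
    dsimp [homCopower]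
    simp
  right_inv := by
    intro g
    simp [homCopower]

theorem copowerEquiv_naturality (a : A) (P : K) {F G' : A ⥤ K} (η : homCopower a P ⟶ F)
    (μ : F ⟶ G') : copowerEquiv a P G' (η ≫ μ) = copowerEquiv a P F η ≫ μ.app a := by
  simp [copowerEquiv]
  exact (Category.assoc _ _ _).symm

theorem copowerEquiv_symm_naturality (a : A) (P : K) {F G' : A ⥤ K} (g : P ⟶ F.obj a)
    (μ : F ⟶ G') :
    (copowerEquiv a P F).symm g ≫ μ = (copowerEquiv a P G').symm (g ≫ μ.app a) := by
  apply (copowerEquiv a P G').injective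
  rw [copowerEquiv_naturality, Equiv.apply_symm_apply, Equiv.apply_symm_apply]

/-- Evaluating a regular epimorphism of functors gives a regular epimorphism. -/
noncomputable def regularEpiApp {X Y : A ⥤ K} (f : X ⟶ Y) (hf : RegularEpi f) (a : A) :
    RegularEpi (f.app a) where
  W := hf.W.obj a
  left := hf.left.app a
  right := hf.right.app a
  w := by rw [← NatTrans.comp_app, ← NatTrans.comp_app, hf.w]
  isColimit :=
    isColimitCoforkMapOfIsColimit ((evaluation A K).obj a) hf.w hf.isColimit

/-- A pointwise coequalizer of natural transformations is a coequalizer. -/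
noncomputable def regularEpiOfApp {R X Y : A ⥤ K} (f : X ⟶ Y) (p q : R ⟶ X)
    (w : p ≫ f = q ≫ f) (wa : ∀ a, p.app a ≫ f.app a = q.app a ≫ f.app a)
    (h : ∀ a, IsColimit (Cofork.ofπ (f.app a) (wa a))) : RegularEpi f where
  W := R
  left := p
  right := q
  w := w
  isColimit := by
    apply evaluationJointlyReflectsColimits
    intro a
    exact (isColimitMapCoconeCoforkEquiv ((evaluation A K).obj a) w).symm (h a)

/-- A pointwise pullback of natural transformations is a pullback. -/
theorem isPullback_of_app {P' X Y Z : A ⥤ K} {fst : P' ⟶ X} {snd : P' ⟶ Y} {f : X ⟶ Z}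
    {g : Y ⟶ Z} (comm : fst ≫ f = snd ≫ g)
    (h : ∀ a, IsPullback (fst.app a) (snd.app a) (f.app a) (g.app a)) :
    IsPullback fst snd f g := by
  apply IsPullback.of_isLimit (c := PullbackCone.mk fst snd comm)
  apply evaluationJointlyReflectsLimits
  intro a
  exact (isLimitMapConePullbackConeEquiv ((evaluation A K).obj a) comm).symm (h a).isLimit

/-- A regular epimorphism is the coequalizer of any kernel pair of itself. -/
noncomputable def coforkIsColimitOfRegularEpi {C' : Type*} [Category C'] {X Y R' : C'}
    {f : X ⟶ Y} (hf : RegularEpi f) {p q : R' ⟶ X} (hkp : IsKernelPair f p q) :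
    IsColimit (Cofork.ofπ f hkp.w) := by
  haveI : RegularEpi f := hf
  haveI : Epi f := hf.epi f
  have key : ∀ s : Cofork p q, hf.left ≫ s.π = hf.right ≫ s.π := by
    intro s
    calc hf.left ≫ s.π = (hkp.lift hf.left hf.right hf.w ≫ p) ≫ s.π := by
          rw [hkp.lift_fst hf.left hf.right hf.w]
      _ = (hkp.lift hf.left hf.right hf.w ≫ q) ≫ s.π := by
          rw [Category.assoc, Category.assoc, s.condition]
      _ = hf.right ≫ s.π := by rw [hkp.lift_snd hf.left hf.right hf.w]
  have fac : ∀ s : Cofork p q,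
      f ≫ hf.isColimit.desc (Cofork.ofπ s.π (key s)) = s.π := fun s =>
    hf.isColimit.fac (Cofork.ofπ s.π (key s)) WalkingParallelPair.one
  refine Cofork.IsColimit.mk _ (fun s => hf.isColimit.desc (Cofork.ofπ s.π (key s)))
    (fun s => fac s) (fun s m hm => ?_)
  apply (cancel_epi f).1
  rw [fac s]
  exact hm

/-- If `(p,q)` is a kernel pair of some morphism and `e` is a coequalizer of `(p,q)`,
then `(p,q)` is a kernel pair of `e`. -/
theorem isKernelPair_of_coequalizer {C' : Type*} [Category C'] {R' X Y Q : C'} {p q : R' ⟶ X}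
    {f : X ⟶ Y} (hkp : IsKernelPair f p q) {e : X ⟶ Q} (w : p ≫ e = q ≫ e)
    (he : IsColimit (Cofork.ofπ e w)) : IsKernelPair e p q := by
  have hft : e ≫ he.desc (Cofork.ofπ f hkp.w) = f :=
    he.fac (Cofork.ofπ f hkp.w) WalkingParallelPair.one
  apply IsPullback.of_isLimit (c := PullbackCone.mk p q w)
  refine PullbackCone.IsLimit.mk w
    (fun s => hkp.lift s.fst s.snd ?_) (fun s => hkp.lift_fst _ _ _)
    (fun s => hkp.lift_snd _ _ _) (fun s m h1 h2 => ?_)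
  · rw [← hft, ← Category.assoc, ← Category.assoc, s.condition]
  · apply PullbackCone.IsLimit.hom_ext hkp.isLimit
    · exact h1.trans (hkp.lift_fst _ _ _).symm
    · exact h2.trans (hkp.lift_snd _ _ _).symm

/-- An equivalence relation of functors is a pointwise equivalence relation. -/
theorem equivalenceRelationPair_app {R X : A ⥤ K} {p q : R ⟶ X}
    (h : IsEquivalenceRelationPair p q) (a : A) :
    IsEquivalenceRelationPair (p.app a) (q.app a) where
  jointly_mono {Z} r s h1 h2 := by
    apply (copowerEquiv a Z R).symm.injective
    apply h.jointly_mono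
    · rw [copowerEquiv_symm_naturality, copowerEquiv_symm_naturality, h1]
    · rw [copowerEquiv_symm_naturality, copowerEquiv_symm_naturality, h2]
  refl {Z} x := by
    obtain ⟨r, h1, h2⟩ := h.refl ((copowerEquiv a Z X).symm x)
    refine ⟨copowerEquiv a Z R r, ?_, ?_⟩
    · rw [← copowerEquiv_naturality, h1, Equiv.apply_symm_apply]
    · rw [← copowerEquiv_naturality, h2, Equiv.apply_symm_apply]
  symm {Z} r := by
    obtain ⟨s, h1, h2⟩ := h.symm ((copowerEquiv a Z R).symm r)
    refine ⟨copowerEquiv a Z R s, ?_, ?_⟩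
    · rw [← copowerEquiv_naturality, h1, copowerEquiv_naturality, Equiv.apply_symm_apply]
    · rw [← copowerEquiv_naturality, h2, copowerEquiv_naturality, Equiv.apply_symm_apply]
  trans {Z} r s hrs := by
    obtain ⟨t, h1, h2⟩ := h.trans ((copowerEquiv a Z R).symm r) ((copowerEquiv a Z R).symm s)
      (by
        apply (copowerEquiv a Z X).injective
        rw [copowerEquiv_naturality, copowerEquiv_naturality, Equiv.apply_symm_apply,
          Equiv.apply_symm_apply, hrs])
    refine ⟨copowerEquiv a Z R t, ?_, ?_⟩
    · rw [← copowerEquiv_naturality, h1, copowerEquiv_naturality, Equiv.apply_symm_apply]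
    · rw [← copowerEquiv_naturality, h2, copowerEquiv_naturality, Equiv.apply_symm_apply]

/-- `Hom(A(a,-)·P, -)` is isomorphic to evaluation at `a` followed by `Hom(P,-)`. -/
noncomputable def coyonedaCopowerIso (a : A) (P : K) :
    coyoneda.obj (op (homCopower (A := A) a P)) ≅
      (evaluation A K).obj a ⋙ coyoneda.obj (op P) :=
  NatIso.ofComponents (fun F => Equiv.toIso (copowerEquiv a P F)) (by
    intro F G' μ
    ext η
    exact copowerEquiv_naturality a P η μ)

end Aux

/-- If `K` is a finitary quasivariety with small strong generator `G`
of finitely presentable regular projectives and `A` is a small category, then the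
functor category `A ⥤ K` is a finitary quasivariety, with small strong generator
given by the copowers `A(a,-) · G i`; and if `K` is moreover exact (a finitary
variety), then so is `A ⥤ K`. -/
theorem statement6 (K : Type u) [Category.{v} K] [HasColimitsOfSize.{v, v} K]
    (ι : Type v) (G : ι → K) (hdet : ObjectProperty.IsDetecting (Set.range G))
    (hfp : ∀ i, FinPres (G i)) (hproj : ∀ i, RegProjective (G i))
    (A : Type v) [SmallCategory A] :
    (ObjectProperty.IsDetecting (Set.range (fun p : A × ι => homCopower p.1 (G p.2))) ∧
      (∀ (a : A) (i : ι),
        FinPres (homCopower (K := K) a (G i)) ∧ RegProjective (homCopower (K := K) a (G i))) ∧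
      IsFinitaryQuasivariety (A ⥤ K)) ∧
    (IsExactCategory K → IsExactCategory (A ⥤ K)) := by
  constructor
  · have hfpc : ∀ (a : A) (i : ι), FinPres (homCopower (K := K) a (G i)) := by
      intro a i J _ hJ
      haveI : PreservesColimitsOfShape J (coyoneda.obj (op (G i))) := hfp i J _ hJ
      exact preservesColimitsOfShape_of_natIso (coyonedaCopowerIso a (G i)).symm
    have hprojc : ∀ (a : A) (i : ι), RegProjective (homCopower (K := K) a (G i)) := by
      intro a i X Y f hf g
      obtain ⟨hre⟩ := hf
      obtain ⟨g', hg'⟩ := hproj i (f.app a) ⟨regularEpiApp f hre a⟩ (copowerEquiv a (G i) Y g)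
      refine ⟨(copowerEquiv a (G i) X).symm g', ?_⟩
      dsimp only at hg' ⊢
      rw [copowerEquiv_symm_naturality, hg', Equiv.symm_apply_apply]
    have hdetc : ObjectProperty.IsDetecting (Set.range (fun p : A × ι => homCopower p.1 (G p.2))) := by
      intro X Y f hf
      suffices h : ∀ a, IsIso (f.app a) by
        exact NatIso.isIso_of_isIso_app f
      intro a
      apply hdet (f.app a)
      rintro _ ⟨i, rfl⟩ h
      obtain ⟨η, hη, hηu⟩ := hf (homCopower a (G i)) ⟨(a, i), rfl⟩
        ((copowerEquiv a (G i) Y).symm h)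
      refine ⟨copowerEquiv a (G i) X η, ?_, ?_⟩
      · show copowerEquiv a (G i) X η ≫ f.app a = h
        rw [← copowerEquiv_naturality, hη, Equiv.apply_symm_apply]
      · intro y hy
        replace hy : y ≫ f.app a = h := hy
        have : (copowerEquiv a (G i) X).symm y = η := by
          apply hηu
          rw [copowerEquiv_symm_naturality, hy]
        rw [← this, Equiv.apply_symm_apply]
    refine ⟨hdetc, fun a i => ⟨hfpc a i, hprojc a i⟩, ?_⟩
    exact ⟨inferInstance, ⟨A × ι, fun p => homCopower p.1 (G p.2), hdetc,
      fun p => ⟨hfpc p.1 p.2, hprojc p.1 p.2⟩⟩⟩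
  · intro hEx
    haveI : HasFiniteLimits K := hEx.hasFiniteLimits
    refine ⟨⟨inferInstance, ?_, ?_⟩, ?_⟩
    · intro X Y R f p q _
      infer_instance
    · intro P X Y Z fst snd f g hpb hf
      obtain ⟨hre⟩ := hf
      have hsnd : ∀ a, RegularEpi (snd.app a) := by
        intro a
        have := hEx.regEpiPullbackStable (fst.app a) (snd.app a) (f.app a) (g.app a)
          (hpb.map ((evaluation A K).obj a)) ⟨regularEpiApp f hre a⟩
        exact this.some
      have kp : IsKernelPair snd (pullback.fst snd snd) (pullback.snd snd snd) :=
        IsPullback.of_hasPullback snd snd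
      have kpa : ∀ a, IsKernelPair (snd.app a) ((pullback.fst snd snd).app a)
          ((pullback.snd snd snd).app a) := fun a => kp.map ((evaluation A K).obj a)
      exact ⟨regularEpiOfApp snd _ _ kp.w (fun a => (kpa a).w)
        (fun a => coforkIsColimitOfRegularEpi (hsnd a) (kpa a))⟩
    · intro R X p q hpq
      refine ⟨coequalizer p q, coequalizer.π p q, ?_⟩
      apply isPullback_of_app (coequalizer.condition p q)
      intro a
      obtain ⟨Ya, fa, hkpa⟩ := hEx.effectiveEquivalenceRelations (p.app a) (q.app a)
        (equivalenceRelationPair_app hpq a)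
      have hcoeq := isColimitCoforkMapOfIsColimit ((evaluation A K).obj a)
        (coequalizer.condition p q) (coequalizerIsCoequalizer p q)
      exact isKernelPair_of_coequalizer hkpa _ hcoeq

end Paper
end

section
/- Let C be a small category with finite products, equipped with a symmetric monoidal structure (⊗, I) such that − ⊗ − : C × C → C preserves finite products in each variable separately. For every c ∈ C and every finite-product-preserving functor F : C → Set, the Day convolution internal hom [Y(c), F] in [C, Set], where Y(c) = C(c, −), is isomorphic to the functor F(− ⊗ c), and hence preserves finite products. More generally, for an arbitrary functor G : C → Set and a finite-product-preserving F : C → Set, the internal hom [G, F] preserves finite products. -/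
open CategoryTheory CategoryTheory.Limits Opposite

universe w v u

namespace Paper

variable {C : Type u} [Category.{v} C]

open MonoidalCategory

/-- The external product of two `Type`-valued functors. -/
def externalProd {C : Type v} [SmallCategory C] (F G : C ⥤ Type v) :
    C × C ⥤ Type v where
  obj x := F.obj x.1 × G.obj x.2
  map f := TypeCat.ofHom fun p => (F.map f.1 p.1, G.map f.2 p.2)
  map_id x := by
    ext p
    · change F.map (𝟙 x.1) p.1 = p.1
      simp
    · change G.map (𝟙 x.2) p.2 = p.2
      simp
  map_comp f g := by
    ext p
    · change F.map (f.1 ≫ g.1) p.1 = F.map g.1 (F.map f.1 p.1)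
      simp
    · change G.map (f.2 ≫ g.2) p.2 = G.map g.2 (G.map f.2 p.2)
      simp

/-- The tensor product, as a functor `C × C ⥤ C`. -/
def tensorF (C : Type v) [SmallCategory C] [MonoidalCategory C] : C × C ⥤ C :=
  Functor.uncurry.obj (curriedTensor C)

/-- Whiskering of the external product in the first variable. -/
def externalWhisker {C : Type v} [SmallCategory C] {H H' : C ⥤ Type v} (φ : H ⟶ H')
    (G : C ⥤ Type v) : externalProd H G ⟶ externalProd H' G where
  app x := TypeCat.ofHom fun p => (φ.app x.1 p.1, p.2)
  naturality x y f := by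
    ext p
    apply Prod.ext
    · exact (NatTrans.naturality_apply φ f.1 (show H.obj x.1 from p.1) : _)
    · rfl

/-- The functor `(C ⥤ Set)ᵒᵖ ⥤ Set` sending `H` to the set of natural
transformations `H ⊠ G ⟶ (⊗ ⋙ F)`; by the universal property of the Day
convolution (a left Kan extension along `⊗`), this set is in natural bijection
with `Hom(H ⊗_{Day} G, F)`, so a representing object for this functor is exactly
the Day-convolution internal hom `[G, F]`. -/
def dayHomFunctor {C : Type v} [SmallCategory C] [MonoidalCategory C]
    (G F : C ⥤ Type v) : (C ⥤ Type v)ᵒᵖ ⥤ Type v where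
  obj H := externalProd H.unop G ⟶ tensorF C ⋙ F
  map ψ := TypeCat.ofHom fun β => externalWhisker ψ.unop G ≫ β
  map_id H := by
    ext β x p
    rfl
  map_comp ψ ψ' := by
    ext β x p
    rfl

section DayAux

variable {C : Type v} [SmallCategory C] [MonoidalCategory C]

/-- The functor `c ↦ (tensorLeft c ⋙ F)`. -/
def dayE (F : C ⥤ Type v) : C ⥤ C ⥤ Type v :=
  curriedTensor C ⋙ (Functor.whiskeringRight C C (Type v)).obj F

/-- The functor `c ↦ Nat(G, tensorLeft c ⋙ F)`, the explicit Day internal hom. -/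
def dayQ (G F : C ⥤ Type v) : C ⥤ Type v := dayE F ⋙ coyoneda.obj (op G)

/-- `dayQ G F` represents the functor `H ↦ Nat(H ⊠ G, ⊗ ⋙ F)`. -/
def dayQRepr (G F : C ⥤ Type v) : (dayHomFunctor G F).RepresentableBy (dayQ G F) where
  homEquiv {H} :=
    { toFun := fun φ => show externalProd H G ⟶ tensorF C ⋙ F from
        { app := fun x => TypeCat.ofHom fun p => (φ.app x.1 p.1).app x.2 p.2
          naturality := by
            rintro ⟨c, d⟩ ⟨c', d'⟩ ⟨f₁, f₂⟩
            ext p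
            obtain ⟨h, g⟩ := p
            have h1 := NatTrans.naturality_apply φ f₁ h
            dsimp [dayQ, dayE, externalProd, tensorF] at h1 ⊢
            rw [h1]
            change (Functor.whiskerRight ((curriedTensor C).map f₁) F).app d'
              ((φ.app c h).app d' (G.map f₂ g)) = _
            have h2 := NatTrans.naturality_apply (φ.app c h) f₂ g
            dsimp [dayE] at h2 ⊢
            rw [h2, ← MonoidalCategory.whisker_exchange, Functor.map_comp_apply]
            rfl }
      invFun := fun (β : externalProd H G ⟶ tensorF C ⋙ F) =>
        { app := fun c => TypeCat.ofHom fun h => show G ⟶ (dayE F).obj c from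
            { app := fun d => TypeCat.ofHom fun g => β.app (c, d) (h, g)
              naturality := by
                intro d d' f₂
                ext g
                have := NatTrans.naturality_apply β ((𝟙 c, f₂) : (c, d) ⟶ (c, d')) ((h, g) : H.obj c × G.obj d)
                dsimp [externalProd, tensorF] at this ⊢
                simp at this
                exact this }
          naturality := by
            intro c c' f₁
            ext h
            apply NatTrans.ext
            ext d g
            have := NatTrans.naturality_apply β ((f₁, 𝟙 d) : (c, d) ⟶ (c', d)) ((h, g) : H.obj c × G.obj d)
            dsimp [dayQ, dayE, externalProd, tensorF] at this ⊢
            simp at this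
            exact this }
      left_inv := fun φ => by
        apply NatTrans.ext
        funext c
        rfl
      right_inv := fun β => by
        apply NatTrans.ext
        funext x
        rfl }
  homEquiv_comp := by
    intro H H' f g
    apply NatTrans.ext
    funext x
    rfl

/-- Two representing objects of the same functor are isomorphic. -/
noncomputable def reprIso {D : Type u} [Category.{w} D] {Φ : Dᵒᵖ ⥤ Type w} {T T' : D}
    (e : Φ.RepresentableBy T) (e' : Φ.RepresentableBy T') : T ≅ T' :=
  yoneda.preimageIso (e.toIso ≪≫ e'.toIso.symm)

/-- For `G = Y(c)`, the explicit Day hom `dayQ (Y c) F` is `F(- ⊗ c)`. -/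
def dayQYonedaIso (F : C ⥤ Type v) (c : C) :
    dayQ (coyoneda.obj (op c)) F ≅ tensorRight c ⋙ F :=
  NatIso.ofComponents (fun c' => Equiv.toIso (coyonedaEquiv (F := (dayE F).obj c'))) (by
    intro c' c'' f
    ext α
    have := coyonedaEquiv_comp α (((Functor.whiskeringRight C C (Type v)).obj F).map
      ((curriedTensor C).map f))
    dsimp [dayQ, dayE] at this ⊢
    exact this)

end DayAux

/-- With `C` small, finite-product-complete and symmetric monoidal
with tensor preserving finite products in each variable, and `F : C ⥤ Set`
preserving finite products: the Day-convolution internal hom `[Y(c), F]` (any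
representing object `T` of the functor `H ↦ Hom(H ⊗ Y(c), F)`) is isomorphic to
`F(- ⊗ c)` and preserves finite products; and more generally, for any
`G : C ⥤ Set`, the internal hom `[G, F]` preserves finite products. -/
theorem statement8 (C : Type v) [SmallCategory C] [HasFiniteProducts C]
    [MonoidalCategory C] [SymmetricCategory C]
    (htl : ∀ c : C, PreservesFiniteProducts (tensorLeft c))
    (htr : ∀ c : C, PreservesFiniteProducts (tensorRight c))
    (F : C ⥤ Type v) (hF : PreservesFiniteProducts F) :
    (∀ (c : C) (T : C ⥤ Type v),
      (dayHomFunctor (coyoneda.obj (op c)) F).RepresentableBy T →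
        Nonempty (T ≅ tensorRight c ⋙ F) ∧ PreservesFiniteProducts T) ∧
    (∀ (G T : C ⥤ Type v),
      (dayHomFunctor G F).RepresentableBy T → PreservesFiniteProducts T) := by
  have hE : ∀ (F' : C ⥤ Type v), PreservesFiniteProducts F' →
      PreservesFiniteProducts (dayE F') := by
    intro F' hF'
    refine ⟨fun J => preservesLimitsOfShape_of_evaluation _ _ (fun d => ?_)⟩
    have h1 : PreservesLimitsOfShape (Discrete (Fin J)) (tensorRight d) := (htr d).preserves J
    have h2 : PreservesLimitsOfShape (Discrete (Fin J)) F' := hF'.preserves J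
    exact preservesLimitsOfShape_of_natIso
      (F := tensorRight d ⋙ F')
      (NatIso.ofComponents (fun c => Iso.refl _) (by intro x y f; simp [dayE]))
  have key : ∀ (G T : C ⥤ Type v),
      (dayHomFunctor G F).RepresentableBy T → PreservesFiniteProducts T := by
    intro G T hT
    have hQ : PreservesFiniteProducts (dayQ G F) := by
      have := hE F hF
      exact comp_preservesFiniteProducts _ _
    have i : T ≅ dayQ G F := reprIso hT (dayQRepr G F)
    exact ⟨fun J => by
      have := hQ.preserves J
      exact preservesLimitsOfShape_of_natIso i.symm⟩
  refine ⟨fun c T hT => ?_, key⟩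
  refine ⟨⟨reprIso hT (dayQRepr (coyoneda.obj (op c)) F) ≪≫ dayQYonedaIso F c⟩, key _ T hT⟩

end Paper
end

section
/- Let V = (V₀, ⊗, I) be a symmetric monoidal finitary quasivariety. Then the regular projective objects of V₀ are closed under the tensor product: if P and Q are regular projective then P ⊗ Q is regular projective. Consequently, the finitely presentable regular projective objects of V₀ are closed under ⊗. -/
open CategoryTheory CategoryTheory.Limits CategoryTheory.MonoidalCategory Opposite

universe w v u

namespace Paper

variable {C : Type u} [Category.{v} C]

/-- A symmetric monoidal finitary quasivariety: a symmetric monoidal closed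
category whose underlying category is a finitary quasivariety with a small strong
generator `G` of finitely presentable regular projectives, with finitely
presentable unit, and such that tensor products of generators are finitely
presentable and regular projective. -/
structure IsSMFinitaryQuasivariety (V : Type u) [Category.{v} V] [MonoidalCategory V]
    [SymmetricCategory V] [MonoidalClosed V] : Prop where
  hasColimits : HasColimitsOfSize.{v, v} V
  exists_generator : ∃ (ι : Type v) (G : ι → V),
    ObjectProperty.IsDetecting (Set.range G) ∧ (∀ i, FinPres (G i) ∧ RegProjective (G i)) ∧
    (∀ i j, FinPres (G i ⊗ G j) ∧ RegProjective (G i ⊗ G j))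
  unit_fp : FinPres (𝟙_ V)

section Aux

variable {V : Type u} [Category.{v} V]

/-- Regular projectivity is closed under retracts. -/
lemma rp_retract {P P' : V} (h : RegProjective P') (s : P ⟶ P') (r : P' ⟶ P)
    (hsr : s ≫ r = 𝟙 P) : RegProjective P := by
  intro X Y f hf g
  obtain ⟨l, hl⟩ := h f hf (r ≫ g)
  refine ⟨s ≫ l, ?_⟩
  dsimp only at hl ⊢
  rw [Category.assoc, hl, ← Category.assoc, hsr, Category.id_comp]

/-- Regular projectivity is invariant under isomorphism. -/
lemma rp_iso {P P' : V} (h : RegProjective P') (e : P ≅ P') : RegProjective P :=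
  rp_retract h e.hom e.inv e.hom_inv_id

/-- A coproduct of regular projectives is regular projective. -/
lemma rp_sigma {σ : Type v} (A : σ → V) [HasCoproduct A]
    (h : ∀ x, RegProjective (A x)) : RegProjective (∐ A) := by
  intro X Y f hf g
  choose l hl using fun x => h x f hf (Sigma.ι A x ≫ g)
  refine ⟨Sigma.desc l, ?_⟩
  dsimp only at hl ⊢
  apply Sigma.hom_ext
  intro x
  rw [← Category.assoc, colimit.ι_desc]
  exact hl x

/-- In a cocomplete category with a detecting family of regular projectives,
every regular projective object is a retract of a coproduct of members of the
family. -/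
lemma exists_retract_sigma [HasColimitsOfSize.{v, v} V] {ι : Type v} {G : ι → V}
    (hdet : ObjectProperty.IsDetecting (Set.range G)) (hrp : ∀ i, RegProjective (G i)) (P : V)
    (hP : RegProjective P) :
    ∃ (σ : Type v) (a : σ → ι) (s : P ⟶ ∐ fun x => G (a x))
      (r : (∐ fun x => G (a x)) ⟶ P), s ≫ r = 𝟙 P := by
  refine ⟨Σ i, (G i ⟶ P), Sigma.fst, ?_⟩
  set σ := Σ i, (G i ⟶ P) with hσ
  set A := ∐ (fun x : σ => G x.1) with hA
  set e : A ⟶ P := Sigma.desc (fun x => x.2) with he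
  set τ := Σ j : ι, {uv : (G j ⟶ A) × (G j ⟶ A) // uv.1 ≫ e = uv.2 ≫ e} with hτ
  set u : (∐ fun y : τ => G y.1) ⟶ A := Sigma.desc (fun y => y.2.1.1) with hu
  set v : (∐ fun y : τ => G y.1) ⟶ A := Sigma.desc (fun y => y.2.1.2) with hv
  have huv : u ≫ e = v ≫ e := by
    apply Sigma.hom_ext
    intro y
    rw [← Category.assoc, ← Category.assoc, hu, hv, Sigma.ι_desc, Sigma.ι_desc]
    exact y.2.2
  set m : coequalizer u v ⟶ P := coequalizer.desc e huv with hm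
  have hqm : coequalizer.π u v ≫ m = e := coequalizer.π_desc _ _
  have hmiso : IsIso m := by
    apply hdet
    rintro _ ⟨i, rfl⟩ g
    have key : ∀ t t' : G i ⟶ coequalizer u v, t ≫ m = t' ≫ m → t = t' := by
      intro t t' h
      obtain ⟨α, hα⟩ := hrp i (coequalizer.π u v) ⟨coequalizerRegular u v⟩ t
      obtain ⟨α', hα'⟩ := hrp i (coequalizer.π u v) ⟨coequalizerRegular u v⟩ t'
      dsimp only at hα hα'
      have hee : α ≫ e = α' ≫ e := by
        rw [← hqm, ← Category.assoc, ← Category.assoc, hα, hα', h]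
      have hcond := coequalizer.condition u v
      have l1 : Sigma.ι (fun y : τ => G y.1) ⟨i, (α, α'), hee⟩ ≫ u = α := by
        rw [hu, Sigma.ι_desc]
      have l2 : Sigma.ι (fun y : τ => G y.1) ⟨i, (α, α'), hee⟩ ≫ v = α' := by
        rw [hv, Sigma.ι_desc]
      calc t = α ≫ coequalizer.π u v := hα.symm
        _ = (Sigma.ι (fun y : τ => G y.1) ⟨i, (α, α'), hee⟩ ≫ u) ≫ coequalizer.π u v := by
              rw [l1]
        _ = (Sigma.ι (fun y : τ => G y.1) ⟨i, (α, α'), hee⟩ ≫ v) ≫ coequalizer.π u v := by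
              rw [Category.assoc, Category.assoc, hcond]
        _ = α' ≫ coequalizer.π u v := by rw [l2]
        _ = t' := hα'
    refine ⟨Sigma.ι (fun x : σ => G x.1) ⟨i, g⟩ ≫ coequalizer.π u v, ?_, ?_⟩
    · show (Sigma.ι (fun x : σ => G x.1) ⟨i, g⟩ ≫ coequalizer.π u v) ≫ m = g
      rw [Category.assoc, hqm, he, Sigma.ι_desc]
    · intro t ht
      have ht' : t ≫ m = g := ht
      refine key t _ ?_
      rw [ht', Category.assoc, hqm, he, Sigma.ι_desc]
  have hereg : IsRegEpi e := by
    refine ⟨⟨∐ fun y : τ => G y.1, u, v, huv, ?_⟩⟩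
    refine Cofork.IsColimit.mk _
      (fun s => inv m ≫ coequalizer.desc s.π s.condition) (fun s => ?_) (fun s k hk => ?_)
    · show e ≫ inv m ≫ coequalizer.desc s.π s.condition = s.π
      have h1 : (coequalizer.π u v ≫ m) ≫ inv m ≫ coequalizer.desc s.π s.condition
          = s.π := by
        rw [Category.assoc, ← Category.assoc m, IsIso.hom_inv_id,
          Category.id_comp, coequalizer.π_desc]
      rw [hqm] at h1
      exact h1
    · show k = inv m ≫ coequalizer.desc s.π s.condition
      have hk' : e ≫ k = s.π := hk
      have hπ : coequalizer.π u v ≫ m ≫ k = s.π := by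
        rw [← Category.assoc, hqm]; exact hk'
      have hmk : m ≫ k = coequalizer.desc s.π s.condition := by
        apply coequalizer.hom_ext
        rw [hπ, coequalizer.π_desc]
      rw [← hmk, ← Category.assoc, IsIso.inv_hom_id, Category.id_comp]
  obtain ⟨s, hs⟩ := hP e hereg (𝟙 P)
  exact ⟨s, e, hs⟩

end Aux

section AuxMonoidal

variable {V : Type u} [Category.{v} V] [MonoidalCategory V] [MonoidalClosed V]

/-- The natural isomorphism `Hom(A, [Q, -]) ≅ Hom(Q ⊗ A, -)`. -/
noncomputable def ihomCoyonedaIso (Q A : V) :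
    ihom Q ⋙ coyoneda.obj (op A) ≅ coyoneda.obj (op (Q ⊗ A)) :=
  NatIso.ofComponents
    (fun X => (((ihom.adjunction Q).homEquiv A X).symm.toIso))
    (by
      intro X Y f
      ext g
      exact (ihom.adjunction Q).homEquiv_naturality_right_symm g f)

omit [MonoidalCategory V] [MonoidalClosed V] in
/-- Finite presentability is invariant under isomorphism. -/
lemma fp_of_iso {A B : V} (e : A ≅ B) (h : FinPres A) : FinPres B := by
  intro J inst hJ
  haveI := h J inst hJ
  exact preservesColimitsOfShape_of_natIso (coyoneda.mapIso e.op).symm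

/-- Key lemma: if `Q ⊗ G i` is finitely presentable for all members of a
detecting family of finitely presentable objects, then `ihom Q` preserves
colimits of shape `J`. -/
lemma ihom_preservesColimitsOfShape [HasColimitsOfSize.{v, v} V] {ι : Type v} (G : ι → V)
    (hdet : ObjectProperty.IsDetecting (Set.range G)) (hfp : ∀ i, FinPres (G i)) (Q : V)
    (hQ : ∀ i, FinPres (Q ⊗ G i)) (J : Type v) [inst : SmallCategory J] (hJ : IsFiltered J) :
    PreservesColimitsOfShape J (ihom Q) := by
  constructor
  intro D
  haveI : IsIso (colimit.post D (ihom Q)) := by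
    apply hdet
    rintro _ ⟨i, rfl⟩ g
    haveI := hfp i J inst hJ
    haveI := hQ i J inst hJ
    set F₁ := coyoneda.obj (op (G i)) with hF₁
    have h₁ : IsColimit (F₁.mapCocone (colimit.cocone (D ⋙ ihom Q))) :=
      isColimitOfPreserves F₁ (colimit.isColimit _)
    haveI : PreservesColimit D (ihom Q ⋙ F₁) :=
      preservesColimit_of_natIso D (ihomCoyonedaIso Q (G i)).symm
    have h₂ : IsColimit ((ihom Q ⋙ F₁).mapCocone (colimit.cocone D)) :=
      isColimitOfPreserves _ (colimit.isColimit D)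
    let ψ : F₁.mapCocone (colimit.cocone (D ⋙ ihom Q)) ⟶
        (ihom Q ⋙ F₁).mapCocone (colimit.cocone D) :=
      { hom := TypeCat.ofHom (fun t => t ≫ colimit.post D (ihom Q))
        w := by
          intro k
          ext t
          show (t ≫ colimit.ι (D ⋙ ihom Q) k) ≫ colimit.post D (ihom Q) =
            t ≫ (ihom Q).map (colimit.ι D k)
          rw [Category.assoc, colimit.ι_post] }
    haveI := IsColimit.hom_isIso h₁ h₂ ψ
    haveI : IsIso ((Cocones.forget _).map ψ) := inferInstance
    have hbij : Function.Bijective (fun t : G i ⟶ colimit (D ⋙ ihom Q) =>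
        t ≫ colimit.post D (ihom Q)) :=
      (isIso_iff_bijective ((Cocones.forget _).map ψ)).mp inferInstance
    exact hbij.existsUnique g
  exact preservesColimit_of_isIso_post (F := D) (G := ihom Q)

end AuxMonoidal

set_option maxHeartbeats 1000000

/-- In a symmetric monoidal finitary quasivariety, regular projective
objects are closed under the tensor product, and consequently so are the finitely
presentable regular projective objects. -/
theorem statement9 (V : Type u) [Category.{v} V] [MonoidalCategory V]
    [SymmetricCategory V] [MonoidalClosed V] (hV : IsSMFinitaryQuasivariety V) :
    (∀ P Q : V, RegProjective P → RegProjective Q → RegProjective (P ⊗ Q)) ∧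
    (∀ P Q : V, FinPres P → RegProjective P → FinPres Q → RegProjective Q →
      FinPres (P ⊗ Q) ∧ RegProjective (P ⊗ Q)) := by
  haveI := hV.hasColimits
  obtain ⟨ι, G, hdet, hGen, hGG⟩ := hV.exists_generator
  have hGfp : ∀ i, FinPres (G i) := fun i => (hGen i).1
  have hGrp : ∀ i, RegProjective (G i) := fun i => (hGen i).2
  -- Part 1: regular projectives are closed under tensor.
  have rpTensor : ∀ P Q : V, RegProjective P → RegProjective Q → RegProjective (P ⊗ Q) := by
    intro P Q hP hQ
    obtain ⟨σ, a, sP, rP, hsrP⟩ := exists_retract_sigma hdet hGrp P hP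
    obtain ⟨σ', b, sQ, rQ, hsrQ⟩ := exists_retract_sigma hdet hGrp Q hQ
    have hGB : ∀ j : ι, RegProjective (G j ⊗ (∐ fun y => G (b y))) := by
      intro j
      have h1 : RegProjective (∐ fun y => (tensorLeft (G j)).obj (G (b y))) :=
        rp_sigma _ (fun y => (hGG j (b y)).2)
      exact rp_iso h1 ((asIso (sigmaComparison (tensorLeft (G j)) fun y => G (b y))).symm)
    have hBA : RegProjective ((∐ fun y => G (b y)) ⊗ (∐ fun x => G (a x))) := by
      have h1 : RegProjective
          (∐ fun x => (tensorLeft (∐ fun y => G (b y))).obj (G (a x))) :=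
        rp_sigma _ (fun x => rp_iso (hGB (a x)) (β_ (∐ fun y => G (b y)) (G (a x))))
      exact rp_iso h1
        ((asIso (sigmaComparison (tensorLeft (∐ fun y => G (b y))) fun x => G (a x))).symm)
    have hAB : RegProjective ((∐ fun x => G (a x)) ⊗ (∐ fun y => G (b y))) :=
      rp_iso hBA (β_ _ _)
    refine rp_retract hAB (sP ⊗ₘ sQ) (rP ⊗ₘ rQ) ?_
    rw [tensorHom_comp_tensorHom, hsrP, hsrQ, id_tensorHom_id]
  -- Part 2: finitely presentables are closed under tensor.
  have fpTensor : ∀ P Q : V, FinPres P → FinPres Q → FinPres (P ⊗ Q) := by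
    intro P Q hP hQ
    have stepA : ∀ (j : ι) (J : Type v) (inst : SmallCategory J), IsFiltered J →
        PreservesColimitsOfShape J (ihom (G j)) := fun j J inst hJ =>
      ihom_preservesColimitsOfShape G hdet hGfp (G j) (fun i => (hGG j i).1) J hJ
    have stepB : ∀ (R : V), FinPres R → ∀ i, FinPres (G i ⊗ R) := by
      intro R hR i J inst hJ
      haveI := stepA i J inst hJ
      haveI := hR J inst hJ
      exact preservesColimitsOfShape_of_natIso (ihomCoyonedaIso (G i) R)
    have stepC : ∀ i, FinPres (Q ⊗ G i) :=
      fun i => fp_of_iso (β_ (G i) Q) (stepB Q hQ i)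
    intro J inst hJ
    haveI := ihom_preservesColimitsOfShape G hdet hGfp Q stepC J hJ
    haveI := hP J inst hJ
    exact preservesColimitsOfShape_of_natIso
      ((ihomCoyonedaIso Q P) ≪≫ (coyoneda.mapIso (β_ Q P).op).symm)
  exact ⟨rpTensor, fun P Q hPf hPr hQf hQr => ⟨fpTensor P Q hPf hQf, rpTensor P Q hPr hQr⟩⟩

end Paper
end
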